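/- In the integral group ring ℤ[S_3], where S_3 = ⟨a, b ∣ a² = 1, b³ = 1, aba⁻¹ = b⁻¹⟩, the left annihilator of the element b²a + a − 1 is the principal left ideal generated by (b−1)(ba−1): for h ∈ ℤ[S_3], h(b²a + a − 1) = 0 if and only if h = k(b−1)(ba−1) for some k ∈ ℤ[S_3]. -/

import Mathlib

/-- The symmetric group on 3 letters. -/
abbrev S3 := Equiv.Perm (Fin 3)

/-- The integral group ring ℤ[S₃]. -/
abbrev ZS3 := MonoidAlgebra ℤ S3

/-- The canonical inclusion of group elements in the group ring. -/
noncomputable def og (g : S3) : ZS3 := MonoidAlgebra.of ℤ S3 g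

set_option maxHeartbeats 1000000 in
/-- In ℤ[S₃] with S₃ = ⟨a, b ∣ a² = 1, b³ = 1, aba⁻¹ = b⁻¹⟩, the left annihilator of
b²a + a − 1 is the principal left ideal generated by (b−1)(ba−1). -/
theorem left_annihilator_b2a_add_a_sub_one (a b : S3) (ha : a ^ 2 = 1) (hb : b ^ 3 = 1)
    (hab : a * b * a⁻¹ = b⁻¹) (hgen : Subgroup.closure {a, b} = ⊤) (h : ZS3) :
    h * (og (b ^ 2) * og a + og a - 1) = 0 ↔
      ∃ k : ZS3, h = k * ((og b - 1) * (og b * og a - 1)) := by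
  classical
  have haa : a * a = 1 := by rw [← sq]; exact ha
  have hbbb : b * (b * b) = 1 := by rw [← hb, pow_succ, pow_succ, pow_one, mul_assoc]
  have hainv : a⁻¹ = a := by rw [← mul_one a⁻¹, ← haa, ← mul_assoc, inv_mul_cancel, one_mul]
  have hbinv : b⁻¹ = b * b := by rw [← mul_one b⁻¹, ← hbbb, ← mul_assoc, inv_mul_cancel, one_mul]
  have hba : a * b = b * (b * a) := by
    have h1 : a * b * a = b * b := by rw [← hbinv, ← hab, hainv]
    calc a * b = a * b * a * a := by rw [mul_assoc, haa, mul_one]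
    _ = b * b * a := by rw [h1]
    _ = b * (b * a) := by rw [mul_assoc]
  have haa' : ∀ x : S3, a * (a * x) = x := by intro x; rw [← mul_assoc, haa, one_mul]
  have hbbb' : ∀ x : S3, b * (b * (b * x)) = x := by
    intro x; rw [← mul_assoc, ← mul_assoc, mul_assoc b b b, hbbb, one_mul]
  have hba' : ∀ x : S3, a * (b * x) = b * (b * (a * x)) := by
    intro x; rw [← mul_assoc, hba, mul_assoc, mul_assoc]
  have mem6 : ∀ g : S3, g = 1 ∨ g = b ∨ g = b*b ∨ g = a ∨ g = b*a ∨ g = b*(b*a) := by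
    intro g
    have hg : g ∈ Subgroup.closure ({a, b} : Set S3) := hgen ▸ Subgroup.mem_top g
    induction hg using Subgroup.closure_induction with
    | mem x hx => rcases hx with rfl | rfl <;> tauto
    | one => tauto
    | mul x y hx hy px py =>
      rcases px with rfl | rfl | rfl | rfl | rfl | rfl <;>
        rcases py with rfl | rfl | rfl | rfl | rfl | rfl <;>
        simp only [one_mul, mul_one, mul_assoc, haa, haa', hbbb, hbbb', hba, hba'] <;> tauto
    | inv x hx px =>
      rcases px with rfl | rfl | rfl | rfl | rfl | rfl <;>
        simp only [inv_one, mul_inv_rev, hainv, hbinv, one_mul, mul_one, mul_assoc, haa, haa', hbbb, hbbb', hba, hba'] <;> tauto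
  set f : Fin 6 → S3 := ![1, b, b*b, a, b*a, b*(b*a)] with hf
  have hsurj : Function.Surjective f := by
    intro g
    rcases mem6 g with rfl | rfl | rfl | rfl | rfl | rfl
    exacts [⟨0, rfl⟩, ⟨1, rfl⟩, ⟨2, rfl⟩, ⟨3, rfl⟩, ⟨4, rfl⟩, ⟨5, rfl⟩]
  have hbij : Function.Bijective f :=
    (Fintype.bijective_iff_surjective_and_card f).2 ⟨hsurj, by simp [Fintype.card_perm]; rfl⟩
  have key : ∀ i j : Fin 6, f i = f j → i = j := fun i j hij => hbij.injective hij
  have ne01 : (1 : S3) ≠ (b) := fun e => absurd (key 0 1 e) (by decide)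
  have ne02 : (1 : S3) ≠ (b*b) := fun e => absurd (key 0 2 e) (by decide)
  have ne03 : (1 : S3) ≠ (a) := fun e => absurd (key 0 3 e) (by decide)
  have ne04 : (1 : S3) ≠ (b*a) := fun e => absurd (key 0 4 e) (by decide)
  have ne05 : (1 : S3) ≠ (b*(b*a)) := fun e => absurd (key 0 5 e) (by decide)
  have ne10 : (b : S3) ≠ (1) := fun e => absurd (key 1 0 e) (by decide)
  have ne12 : (b : S3) ≠ (b*b) := fun e => absurd (key 1 2 e) (by decide)
  have ne13 : (b : S3) ≠ (a) := fun e => absurd (key 1 3 e) (by decide)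
  have ne14 : (b : S3) ≠ (b*a) := fun e => absurd (key 1 4 e) (by decide)
  have ne15 : (b : S3) ≠ (b*(b*a)) := fun e => absurd (key 1 5 e) (by decide)
  have ne20 : (b*b : S3) ≠ (1) := fun e => absurd (key 2 0 e) (by decide)
  have ne21 : (b*b : S3) ≠ (b) := fun e => absurd (key 2 1 e) (by decide)
  have ne23 : (b*b : S3) ≠ (a) := fun e => absurd (key 2 3 e) (by decide)
  have ne24 : (b*b : S3) ≠ (b*a) := fun e => absurd (key 2 4 e) (by decide)
  have ne25 : (b*b : S3) ≠ (b*(b*a)) := fun e => absurd (key 2 5 e) (by decide)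
  have ne30 : (a : S3) ≠ (1) := fun e => absurd (key 3 0 e) (by decide)
  have ne31 : (a : S3) ≠ (b) := fun e => absurd (key 3 1 e) (by decide)
  have ne32 : (a : S3) ≠ (b*b) := fun e => absurd (key 3 2 e) (by decide)
  have ne34 : (a : S3) ≠ (b*a) := fun e => absurd (key 3 4 e) (by decide)
  have ne35 : (a : S3) ≠ (b*(b*a)) := fun e => absurd (key 3 5 e) (by decide)
  have ne40 : (b*a : S3) ≠ (1) := fun e => absurd (key 4 0 e) (by decide)
  have ne41 : (b*a : S3) ≠ (b) := fun e => absurd (key 4 1 e) (by decide)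
  have ne42 : (b*a : S3) ≠ (b*b) := fun e => absurd (key 4 2 e) (by decide)
  have ne43 : (b*a : S3) ≠ (a) := fun e => absurd (key 4 3 e) (by decide)
  have ne45 : (b*a : S3) ≠ (b*(b*a)) := fun e => absurd (key 4 5 e) (by decide)
  have ne50 : (b*(b*a) : S3) ≠ (1) := fun e => absurd (key 5 0 e) (by decide)
  have ne51 : (b*(b*a) : S3) ≠ (b) := fun e => absurd (key 5 1 e) (by decide)
  have ne52 : (b*(b*a) : S3) ≠ (b*b) := fun e => absurd (key 5 2 e) (by decide)
  have ne53 : (b*(b*a) : S3) ≠ (a) := fun e => absurd (key 5 3 e) (by decide)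
  have ne54 : (b*(b*a) : S3) ≠ (b*a) := fun e => absurd (key 5 4 e) (by decide)
  -- apply lemmas
  have Aadd : ∀ (x y : ZS3) (g : S3), (x + y).coeff g = x.coeff g + y.coeff g := fun _ _ _ => rfl
  have Asub : ∀ (x y : ZS3) (g : S3), (x - y).coeff g = x.coeff g - y.coeff g := fun _ _ _ => rfl
  have Aneg : ∀ (x : ZS3) (g : S3), (-x).coeff g = -(x.coeff g) := fun x g => rfl
  have Azero : ∀ (g : S3), (0 : ZS3).coeff g = 0 := fun _ => rfl
  have Asingle : ∀ (u g : S3) (c : ℤ), (MonoidAlgebra.single u c).coeff g = if u = g then c else 0 :=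
    fun _ _ _ => Finsupp.single_apply
  have hexp : h = MonoidAlgebra.single 1 (h.coeff 1) + MonoidAlgebra.single b (h.coeff b)
      + MonoidAlgebra.single (b*b) (h.coeff (b*b)) + MonoidAlgebra.single a (h.coeff a)
      + MonoidAlgebra.single (b*a) (h.coeff (b*a)) + MonoidAlgebra.single (b*(b*a)) (h.coeff (b*(b*a))) := by
    refine MonoidAlgebra.coeff_injective <| Finsupp.ext fun g => ?_
    rcases mem6 g with rfl | rfl | rfl | rfl | rfl | rfl <;>
      simp [Aadd, Asub, Aneg, Azero, Asingle, ne01, ne02, ne03, ne04, ne05, ne10, ne12, ne13, ne14, ne15, ne20, ne21, ne23, ne24, ne25, ne30, ne31, ne32, ne34, ne35, ne40, ne41, ne42, ne43, ne45, ne50, ne51, ne52, ne53, ne54]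
  have hsq : b ^ 2 = b * b := sq b
  constructor
  · intro hx0
    have E : ∀ g : S3, (h * (og (b ^ 2) * og a + og a - 1)).coeff g = 0 := by
      intro g; rw [hx0]; rfl
    have E1 := E 1
    have E2 := E b
    have E3 := E (b*b)
    have E4 := E a
    have E5 := E (b*a)
    have E6 := E (b*(b*a))
    rw [hexp] at E1 E2 E3 E4 E5 E6
    simp only [hsq, og, MonoidAlgebra.of_apply, MonoidAlgebra.one_def, MonoidAlgebra.single_mul_single, sub_mul, mul_sub, add_mul, mul_add, one_mul, mul_one, one_mul, mul_one, mul_assoc, haa, haa', hbbb, hbbb', hba, hba', Aadd, Asub, Aneg, Azero, Asingle] at E1 E2 E3 E4 E5 E6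
    simp only [ne01, ne02, ne03, ne04, ne05, ne10, ne12, ne13, ne14, ne15, ne20, ne21, ne23, ne24, ne25, ne30, ne31, ne32, ne34, ne35, ne40, ne41, ne42, ne43, ne45, ne50, ne51, ne52, ne53, ne54, reduceIte, add_zero, zero_add, sub_zero, zero_sub, neg_zero] at E1 E2 E3 E4 E5 E6
    refine ⟨MonoidAlgebra.single b (h.coeff b) - MonoidAlgebra.single (b*b) (h.coeff 1), ?_⟩
    refine MonoidAlgebra.coeff_injective <| Finsupp.ext fun g => ?_
    rcases mem6 g with rfl | rfl | rfl | rfl | rfl | rfl <;>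
      · simp only [og, MonoidAlgebra.of_apply, MonoidAlgebra.one_def, MonoidAlgebra.single_mul_single, sub_mul, mul_sub, add_mul, mul_add, one_mul, mul_one, one_mul, mul_one, mul_assoc, haa, haa', hbbb, hbbb', hba, hba', Aadd, Asub, Aneg, Azero, Asingle]
        simp only [ne01, ne02, ne03, ne04, ne05, ne10, ne12, ne13, ne14, ne15, ne20, ne21, ne23, ne24, ne25, ne30, ne31, ne32, ne34, ne35, ne40, ne41, ne42, ne43, ne45, ne50, ne51, ne52, ne53, ne54, reduceIte, add_zero, zero_add, sub_zero, zero_sub, neg_zero]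
        omega
  · rintro ⟨k, rfl⟩
    rw [mul_assoc]
    have hz : ((og b - 1) * (og b * og a - 1)) * (og (b ^ 2) * og a + og a - 1) = 0 := by
      refine MonoidAlgebra.coeff_injective <| Finsupp.ext fun g => ?_
      rcases mem6 g with rfl | rfl | rfl | rfl | rfl | rfl <;>
        · simp only [hsq, og, MonoidAlgebra.of_apply, MonoidAlgebra.one_def, MonoidAlgebra.single_mul_single, sub_mul, mul_sub, add_mul, mul_add, one_mul, mul_one, one_mul, mul_one, mul_assoc, haa, haa', hbbb, hbbb', hba, hba', Aadd, Asub, Aneg, Azero, Asingle]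
          simp only [ne01, ne02, ne03, ne04, ne05, ne10, ne12, ne13, ne14, ne15, ne20, ne21, ne23, ne24, ne25, ne30, ne31, ne32, ne34, ne35, ne40, ne41, ne42, ne43, ne45, ne50, ne51, ne52, ne53, ne54, reduceIte]
          ring
    rw [hz, mul_zero]
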